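/- Let α > γ > 0, β > 0, and set ψ(u) = [ (√π βγ/(α-γ)^{3/2}) e^{β²/(α-γ)} (erf((√(α-γ)√u + β/√(α-γ)) ) - 1) + (α/(α-γ)) e^{-(α-γ)u - 2β√u} ] / [ (√π βγ/(α-γ)^{3/2}) e^{β²/(α-γ)} (erf(β/√(α-γ)) - 1) + α/(α-γ) ]. Then ψ(0) = 1, ψ is strictly decreasing on [0,∞), and ψ(u) → 0 as u → ∞. -/

import Mathlib

open Filter Real Set

/-- The error function `erf x = (2/√π) ∫_0^x e^{-t²} dt`. -/
noncomputable def errorFunction (x : ℝ) : ℝ :=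
  2 / Real.sqrt Real.pi * ∫ t in (0:ℝ)..x, Real.exp (-t ^ 2)

open MeasureTheory

lemma gauss_cont : Continuous (fun t : ℝ => Real.exp (-t ^ 2)) := by continuity

lemma gauss_integrableOn (x : ℝ) : IntegrableOn (fun t : ℝ => Real.exp (-t ^ 2)) (Ioi x) := by
  have := integrable_exp_neg_mul_sq (b := 1) one_pos
  simpa using this.integrableOn

lemma gauss_moment (x : ℝ) (hx : 0 ≤ x) :
    IntegrableOn (fun t : ℝ => t * Real.exp (-t ^ 2)) (Ioi x) ∧
    (∫ t in Ioi x, t * Real.exp (-t ^ 2)) = Real.exp (-x ^ 2) / 2 := by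
  have hderiv : ∀ t ∈ Ici x, HasDerivAt (fun t : ℝ => -Real.exp (-t ^ 2) / 2)
      (t * Real.exp (-t ^ 2)) t := by
    intro t _
    have h1 : HasDerivAt (fun t : ℝ => -t ^ 2) (-(2 * t)) t := by
      simpa [Pi.neg_def] using ((hasDerivAt_pow 2 t).neg)
    have h2 : HasDerivAt (fun t : ℝ => -Real.exp (-t ^ 2) / 2)
        (-(Real.exp (-t ^ 2) * -(2 * t)) / 2) t := (h1.exp).neg.div_const 2
    convert h2 using 1
    ring
  have hpos : ∀ t ∈ Ioi x, 0 ≤ t * Real.exp (-t ^ 2) := by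
    intro t ht
    have : 0 < t := lt_of_le_of_lt hx ht
    positivity
  have htend : Tendsto (fun t : ℝ => -Real.exp (-t ^ 2) / 2) atTop (nhds 0) := by
    have h1 : Tendsto (fun t : ℝ => -t ^ 2) atTop atBot := by
      exact tendsto_neg_atBot_iff.mpr (tendsto_pow_atTop (α := ℝ) (n := 2) two_ne_zero)
    have := (Real.tendsto_exp_atBot.comp h1).neg.div_const 2
    simpa using this
  have hcont : ContinuousWithinAt (fun t : ℝ => -Real.exp (-t ^ 2) / 2) (Ici x) x :=
    (Continuous.continuousWithinAt (by continuity))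
  have hderiv' : ∀ t ∈ Ioi x, HasDerivAt (fun t : ℝ => -Real.exp (-t ^ 2) / 2)
      (t * Real.exp (-t ^ 2)) t := fun t ht => hderiv t (mem_Ici.mpr (le_of_lt ht))
  constructor
  · exact integrableOn_Ioi_deriv_of_nonneg hcont hderiv' hpos htend
  · have := integral_Ioi_of_hasDerivAt_of_nonneg hcont hderiv' hpos htend
    rw [this]; ring

lemma erf_tail {x : ℝ} (hx : 0 < x) :
    1 - errorFunction x ≤ Real.exp (-x ^ 2) / (Real.sqrt Real.pi * x) := by
  have hπ : (0:ℝ) < Real.sqrt Real.pi := Real.sqrt_pos.mpr Real.pi_pos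
  have hsplit : (∫ t in Ioi (0:ℝ), Real.exp (-t ^ 2))
      = (∫ t in (0:ℝ)..x, Real.exp (-t ^ 2)) + ∫ t in Ioi x, Real.exp (-t ^ 2) := by
    rw [intervalIntegral.integral_of_le hx.le, ← MeasureTheory.setIntegral_union
      (Ioc_disjoint_Ioi le_rfl) measurableSet_Ioi
      ((gauss_integrableOn 0).mono_set Ioc_subset_Ioi_self) (gauss_integrableOn x),
      Ioc_union_Ioi_eq_Ioi hx.le]
  have hg : (∫ t in Ioi (0:ℝ), Real.exp (-t ^ 2)) = Real.sqrt Real.pi / 2 := by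
    have := integral_gaussian_Ioi 1
    simpa using this
  have hbound : (∫ t in Ioi x, Real.exp (-t ^ 2)) ≤ Real.exp (-x ^ 2) / (2 * x) := by
    have hmono : (∫ t in Ioi x, Real.exp (-t ^ 2)) ≤ ∫ t in Ioi x, (1 / x) * (t * Real.exp (-t ^ 2)) := by
      apply MeasureTheory.setIntegral_mono_on (gauss_integrableOn x)
        ((gauss_moment x hx.le).1.const_mul (1 / x)) measurableSet_Ioi
      intro t ht
      have h1 : 1 ≤ t / x := (one_le_div hx).mpr (le_of_lt ht)
      have := Real.exp_pos (-t ^ 2)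
      calc Real.exp (-t ^ 2) = 1 * Real.exp (-t ^ 2) := by ring
        _ ≤ (t / x) * Real.exp (-t ^ 2) := mul_le_mul_of_nonneg_right h1 this.le
        _ = 1 / x * (t * Real.exp (-t ^ 2)) := by ring
    rw [MeasureTheory.integral_const_mul, (gauss_moment x hx.le).2] at hmono
    calc (∫ t in Ioi x, Real.exp (-t ^ 2)) ≤ (1 / x) * (Real.exp (-x ^ 2) / 2) := hmono
      _ = Real.exp (-x ^ 2) / (2 * x) := by field_simp
  have : 1 - errorFunction x = 2 / Real.sqrt Real.pi * ∫ t in Ioi x, Real.exp (-t ^ 2) := by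
    unfold errorFunction
    have h1 : (∫ t in (0:ℝ)..x, Real.exp (-t ^ 2))
        = Real.sqrt Real.pi / 2 - ∫ t in Ioi x, Real.exp (-t ^ 2) := by
      rw [← hg, hsplit]; ring
    rw [h1]
    field_simp
    ring
  rw [this]
  calc 2 / Real.sqrt Real.pi * ∫ t in Ioi x, Real.exp (-t ^ 2)
      ≤ 2 / Real.sqrt Real.pi * (Real.exp (-x ^ 2) / (2 * x)) := by
        apply mul_le_mul_of_nonneg_left hbound (by positivity)
    _ = Real.exp (-x ^ 2) / (Real.sqrt Real.pi * x) := by field_simp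

lemma erf_hasDerivAt (x : ℝ) :
    HasDerivAt errorFunction (2 / Real.sqrt Real.pi * Real.exp (-x ^ 2)) x := by
  have h : HasDerivAt (fun y => ∫ t in (0:ℝ)..y, Real.exp (-t ^ 2)) (Real.exp (-x ^ 2)) x :=
    intervalIntegral.integral_hasDerivAt_right (gauss_cont.intervalIntegrable _ _)
      (gauss_cont.stronglyMeasurableAtFilter _ _) gauss_cont.continuousAt
  exact h.const_mul _

lemma erf_tendsto : Tendsto errorFunction atTop (nhds 1) := by
  have h := MeasureTheory.intervalIntegral_tendsto_integral_Ioi (0:ℝ)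
    (gauss_integrableOn 0) tendsto_id
  have hg : (∫ t in Ioi (0:ℝ), Real.exp (-t ^ 2)) = Real.sqrt Real.pi / 2 := by
    have := integral_gaussian_Ioi 1
    simpa using this
  have h2 := h.const_mul (2 / Real.sqrt Real.pi)
  have hπ : Real.sqrt Real.pi ≠ 0 := by positivity
  have : (2 / Real.sqrt Real.pi) * (∫ t in Ioi (0:ℝ), Real.exp (-t ^ 2)) = 1 := by
    rw [hg]; field_simp
  rw [this] at h2
  exact h2.congr (fun y => by simp [errorFunction, mul_comm])

lemma erf_continuous : Continuous errorFunction :=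
  continuous_iff_continuousAt.mpr (fun x => (erf_hasDerivAt x).differentiableAt.continuousAt)


theorem stmt16 (α β γ : ℝ) (hγ : 0 < γ) (hαγ : γ < α) (hβ : 0 < β) :
    let ψ : ℝ → ℝ := fun u =>
      (Real.sqrt Real.pi * β * γ / (α - γ) ^ ((3:ℝ) / 2) * Real.exp (β ^ 2 / (α - γ)) *
          (errorFunction (Real.sqrt (α - γ) * Real.sqrt u + β / Real.sqrt (α - γ)) - 1)
        + α / (α - γ) * Real.exp (-(α - γ) * u - 2 * β * Real.sqrt u)) /
      (Real.sqrt Real.pi * β * γ / (α - γ) ^ ((3:ℝ) / 2) * Real.exp (β ^ 2 / (α - γ)) *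
          (errorFunction (β / Real.sqrt (α - γ)) - 1)
        + α / (α - γ))
    ψ 0 = 1 ∧ StrictAntiOn ψ (Ici 0) ∧ Tendsto ψ atTop (nhds 0) := by
  intro ψ
  set a : ℝ := α - γ with ha_def
  have ha : 0 < a := by simp [ha_def]; linarith
  have hT : 0 < Real.sqrt a := Real.sqrt_pos.mpr ha
  have hP : 0 < Real.sqrt Real.pi := Real.sqrt_pos.mpr Real.pi_pos
  set b : ℝ := β / Real.sqrt a with hb_def
  have hb : 0 < b := div_pos hβ hT
  have hb2 : b ^ 2 = β ^ 2 / a := by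
    rw [hb_def, div_pow, Real.sq_sqrt ha.le]
  have h32 : a ^ ((3:ℝ) / 2) = a * Real.sqrt a := by
    rw [show ((3:ℝ)/2) = 1 + 1/2 by norm_num, Real.rpow_add ha, Real.rpow_one,
      ← Real.sqrt_eq_rpow]
  set C : ℝ := Real.sqrt Real.pi * β * γ / a ^ ((3:ℝ) / 2) * Real.exp (β ^ 2 / a) with hC_def
  have hC : 0 < C := by
    rw [hC_def]
    have : (0:ℝ) < a ^ ((3:ℝ)/2) := by rw [h32]; positivity
    positivity
  set D : ℝ := C * (errorFunction b - 1) + α / a with hD_def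
  -- D ≥ 1
  have hD1 : 1 ≤ D := by
    have htail := erf_tail hb
    have hkey : C * (Real.exp (-b ^ 2) / (Real.sqrt Real.pi * b)) = γ / a := by
      rw [hC_def, hb2, h32, hb_def, Real.exp_neg]
      field_simp
    have h1 : C * (errorFunction b - 1) ≥ -(γ / a) := by
      rw [← hkey]
      have := mul_le_mul_of_nonneg_left htail hC.le
      linarith
    have h2 : α / a = γ / a + 1 := by
      field_simp
      ring
    rw [hD_def, h2]; linarith
  have hD : 0 < D := lt_of_lt_of_le one_pos hD1
  have hψ_eq : ∀ u, ψ u =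
      (C * (errorFunction (Real.sqrt a * Real.sqrt u + b) - 1)
        + α / a * Real.exp (-a * u - 2 * β * Real.sqrt u)) / D := by
    intro u; rfl
  refine ⟨?_, ?_, ?_⟩
  · -- ψ 0 = 1
    rw [hψ_eq]
    simp only [Real.sqrt_zero, mul_zero, add_zero, zero_add, sub_zero, neg_zero, Real.exp_zero,
      mul_one]
    exact div_self (ne_of_gt hD)
  · -- StrictAntiOn
    have hψ_fun : ψ = fun u => (C * (errorFunction (Real.sqrt a * Real.sqrt u + b) - 1)
        + α / a * Real.exp (-a * u - 2 * β * Real.sqrt u)) / D := funext hψ_eq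
    rw [hψ_fun]
    apply strictAntiOn_of_deriv_neg (convex_Ici 0)
    · apply Continuous.continuousOn
      apply Continuous.div_const
      apply Continuous.add
      · exact continuous_const.mul ((erf_continuous.comp
          (((continuous_const.mul Real.continuous_sqrt)).add continuous_const)).sub
          continuous_const)
      · exact continuous_const.mul (Real.continuous_exp.comp
          ((continuous_const.mul continuous_id).sub
            (continuous_const.mul Real.continuous_sqrt)))
    · intro u hu
      rw [interior_Ici] at hu
      have hu0 : (0:ℝ) < u := hu
      have hS : 0 < Real.sqrt u := Real.sqrt_pos.mpr hu0
      have hsq : HasDerivAt Real.sqrt (1 / (2 * Real.sqrt u)) u :=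
        Real.hasDerivAt_sqrt (ne_of_gt hu0)
      have harg : HasDerivAt (fun u : ℝ => Real.sqrt a * Real.sqrt u + b)
          (Real.sqrt a * (1 / (2 * Real.sqrt u))) u := (hsq.const_mul _).add_const b
      have herf : HasDerivAt (fun u : ℝ => errorFunction (Real.sqrt a * Real.sqrt u + b))
          (2 / Real.sqrt Real.pi * Real.exp (-(Real.sqrt a * Real.sqrt u + b) ^ 2)
            * (Real.sqrt a * (1 / (2 * Real.sqrt u)))) u :=
        (erf_hasDerivAt _).comp u harg
      have hlin : HasDerivAt (fun u : ℝ => -a * u - 2 * β * Real.sqrt u)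
          (-a * 1 - 2 * β * (1 / (2 * Real.sqrt u))) u :=
        ((hasDerivAt_id u).const_mul (-a)).sub (hsq.const_mul (2 * β))
      have hexp := hlin.exp
      have hN := (((herf.sub_const 1).const_mul C).add (hexp.const_mul (α / a))).div_const D
      have hN' : HasDerivAt (fun u => (C * (errorFunction (Real.sqrt a * Real.sqrt u + b) - 1)
          + α / a * Real.exp (-a * u - 2 * β * Real.sqrt u)) / D) _ u := hN
      rw [hN'.deriv]
      apply div_neg_of_neg_of_pos _ hD
      -- rewrite the gaussian of the argument
      have hsq2 : (Real.sqrt a * Real.sqrt u + b) ^ 2 = a * u + 2 * β * Real.sqrt u + β ^ 2 / a := by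
        have h1 : (Real.sqrt a) ^ 2 = a := Real.sq_sqrt ha.le
        have h2 : (Real.sqrt u) ^ 2 = u := Real.sq_sqrt hu0.le
        have h3 : Real.sqrt a * b = β := by rw [hb_def]; field_simp
        calc (Real.sqrt a * Real.sqrt u + b) ^ 2
            = (Real.sqrt a) ^ 2 * (Real.sqrt u) ^ 2
              + 2 * (Real.sqrt a * b) * Real.sqrt u + b ^ 2 := by ring
          _ = a * u + 2 * β * Real.sqrt u + β ^ 2 / a := by rw [h1, h2, h3, hb2]
      have hEeq : Real.exp (-(Real.sqrt a * Real.sqrt u + b) ^ 2)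
          = Real.exp (-a * u - 2 * β * Real.sqrt u) * (Real.exp (β ^ 2 / a))⁻¹ := by
        rw [← Real.exp_neg, ← Real.exp_add, hsq2]
        congr 1
        ring
      rw [hEeq]
      set E : ℝ := Real.exp (-a * u - 2 * β * Real.sqrt u) with hE_def
      have hE : 0 < E := Real.exp_pos _
      have hnum : C * (2 / Real.sqrt Real.pi * (E * (Real.exp (β ^ 2 / a))⁻¹)
            * (Real.sqrt a * (1 / (2 * Real.sqrt u))))
          + α / a * (E * (-a * 1 - 2 * β * (1 / (2 * Real.sqrt u))))
          = E * ((γ - α) * β / (a * Real.sqrt u) - α) := by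
        rw [hC_def, h32]
        field_simp
        ring
      rw [hnum]
      apply mul_neg_of_pos_of_neg hE
      have h4 : (γ - α) * β / (a * Real.sqrt u) < 0 :=
        div_neg_of_neg_of_pos (by nlinarith) (by positivity)
      linarith
  · -- Tendsto
    have hψ_fun : ψ = fun u => (C * (errorFunction (Real.sqrt a * Real.sqrt u + b) - 1)
        + α / a * Real.exp (-a * u - 2 * β * Real.sqrt u)) / D := funext hψ_eq
    rw [hψ_fun]
    have hsqrt_top : Tendsto Real.sqrt atTop atTop := by
      apply (tendsto_rpow_atTop (y := (1:ℝ)/2) (by norm_num)).congr'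
      filter_upwards [eventually_ge_atTop (0:ℝ)] with x hx
      exact (Real.sqrt_eq_rpow x).symm
    have h1 : Tendsto (fun u : ℝ => Real.sqrt a * Real.sqrt u + b) atTop atTop :=
      tendsto_atTop_add_const_right _ b (hsqrt_top.const_mul_atTop hT)
    have herf1 : Tendsto (fun u : ℝ => errorFunction (Real.sqrt a * Real.sqrt u + b))
        atTop (nhds 1) := erf_tendsto.comp h1
    have h2 : Tendsto (fun u : ℝ => -a * u - 2 * β * Real.sqrt u) atTop atBot := by
      have h3 : Tendsto (fun u : ℝ => a * u + 2 * β * Real.sqrt u) atTop atTop := by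
        apply tendsto_atTop_mono (fun u => ?_) (tendsto_id.const_mul_atTop ha)
        have := Real.sqrt_nonneg u
        simp only [id]
        nlinarith
      exact (tendsto_neg_atBot_iff.mpr h3).congr (fun u => by ring)
    have hexp0 : Tendsto (fun u : ℝ => Real.exp (-a * u - 2 * β * Real.sqrt u))
        atTop (nhds 0) := Real.tendsto_exp_atBot.comp h2
    have := (((herf1.sub_const 1).const_mul C).add (hexp0.const_mul (α / a))).div_const D
    simpa using this
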